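/- Unique minimizer of the maximum-distance Γ-limit: the functional μ ↦ (1/2)·esssup_{x∈Ω} 1/f(x) over probability measures μ on Ω̄ with Lebesgue density f has a unique minimizer, namely the normalized Lebesgue measure dx/|Ω|, with minimal value |Ω|/2. -/

import Mathlib

open MeasureTheory Set Filter Topology
open scoped ENNReal NNReal

noncomputable section

abbrev E2 := EuclideanSpace ℝ (Fin 2)

/-- The maximum-distance `Γ`-limit functional
`μ ↦ (1/2)·esssup_{x∈Ω} 1/f(x)`, where `f` is the Lebesgue density of (the
absolutely continuous part of) `μ` (with `1/0 = ∞`, so the value is `∞` if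
`f` vanishes on a set of positive measure). -/
def maxDistLimit (Ω : Set E2) (μ : Measure E2) : ℝ≥0∞ :=
  essSup (fun x => (2 * μ.rnDeriv volume x)⁻¹) (volume.restrict Ω)

/-- Lower bound: any probability measure has `maxDistLimit ≥ |Ω|/2`. -/
lemma maxDistLimit_lower (Ω : Set E2) (hΩm : MeasurableSet Ω)
    (μ : Measure E2) [IsProbabilityMeasure μ] :
    volume Ω / 2 ≤ maxDistLimit Ω μ := by
  set c := maxDistLimit Ω μ with hc
  have hae : ∀ᵐ x ∂(volume.restrict Ω), (2 * μ.rnDeriv volume x)⁻¹ ≤ c :=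
    ENNReal.ae_le_essSup _
  have hae' : ∀ᵐ x ∂(volume.restrict Ω), 2⁻¹ * c⁻¹ ≤ μ.rnDeriv volume x := by
    filter_upwards [hae] with x hx
    have h1 : c⁻¹ ≤ 2 * μ.rnDeriv volume x := ENNReal.inv_le_iff_inv_le.mp hx
    calc 2⁻¹ * c⁻¹ ≤ 2⁻¹ * (2 * μ.rnDeriv volume x) := by
          exact mul_le_mul_right h1 _
      _ = μ.rnDeriv volume x := by
          rw [← mul_assoc, ENNReal.inv_mul_cancel (by norm_num) (by norm_num), one_mul]
  have hint : 2⁻¹ * c⁻¹ * volume Ω ≤ 1 := by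
    calc 2⁻¹ * c⁻¹ * volume Ω = ∫⁻ _ in Ω, 2⁻¹ * c⁻¹ ∂volume := by
          rw [setLIntegral_const]
      _ ≤ ∫⁻ x in Ω, μ.rnDeriv volume x ∂volume := lintegral_mono_ae hae'
      _ ≤ μ Ω := Measure.setLIntegral_rnDeriv_le Ω
      _ ≤ 1 := prob_le_one
  have h3 : volume Ω ≤ 2 * c := by
    have h2 : (2 * c)⁻¹ * volume Ω ≤ 1 := by
      rwa [ENNReal.mul_inv (Or.inl (by norm_num)) (Or.inl (by norm_num))]
    have h4 : (2 * c)⁻¹ ≤ 1 / volume Ω :=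
      (ENNReal.le_div_iff_mul_le (Or.inr one_ne_zero) (Or.inr ENNReal.one_ne_top)).mpr h2
    rw [one_div] at h4
    simpa using ENNReal.inv_le_iff_inv_le.mp h4
  rw [ENNReal.div_le_iff_le_mul (Or.inl two_ne_zero) (Or.inl ENNReal.ofNat_ne_top), mul_comm]
  exact h3

/-- Unique minimizer of the maximum-distance `Γ`-limit: over probability measures
on `closure Ω`, the functional `μ ↦ (1/2)·esssup_Ω 1/f` is uniquely minimized by
the normalized Lebesgue measure on `Ω`, with minimal value `|Ω|/2`. -/
theorem maxDistLimit_min (Ω : Set E2) (hΩo : IsOpen Ω)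
    (hΩb : Bornology.IsBounded Ω) (hΩne : Ω.Nonempty)
    (μ₀ : Measure E2) (hμ₀ : μ₀ = (volume Ω)⁻¹ • volume.restrict Ω) :
    maxDistLimit Ω μ₀ = volume Ω / 2 ∧
    (∀ μ : Measure E2, IsProbabilityMeasure μ → μ (closure Ω) = 1 →
      maxDistLimit Ω μ₀ ≤ maxDistLimit Ω μ) ∧
    (∀ μ : Measure E2, IsProbabilityMeasure μ → μ (closure Ω) = 1 →
      maxDistLimit Ω μ = maxDistLimit Ω μ₀ → μ = μ₀) := by
  have hΩm : MeasurableSet Ω := hΩo.measurableSet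
  have hpos : volume Ω ≠ 0 := (hΩo.measure_pos volume hΩne).ne'
  have hfin : volume Ω ≠ ∞ := hΩb.measure_lt_top.ne
  haveI : IsFiniteMeasure (volume.restrict Ω) :=
    ⟨by rwa [Measure.restrict_apply_univ, lt_top_iff_ne_top]⟩
  -- density of μ₀
  have hd : μ₀.rnDeriv volume =ᵐ[volume]
      fun x => (volume Ω)⁻¹ * Ω.indicator 1 x := by
    rw [hμ₀]
    calc ((volume Ω)⁻¹ • volume.restrict Ω).rnDeriv volume
        =ᵐ[volume] (volume Ω)⁻¹ • (volume.restrict Ω).rnDeriv volume :=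
          Measure.rnDeriv_smul_left_of_ne_top _ _ (ENNReal.inv_ne_top.mpr hpos)
      _ =ᵐ[volume] fun x => (volume Ω)⁻¹ * Ω.indicator 1 x := by
          filter_upwards [Measure.rnDeriv_restrict_self volume hΩm] with x hx
          simp [hx]
  -- value at μ₀
  have hval : maxDistLimit Ω μ₀ = volume Ω / 2 := by
    have h1 : (fun x => (2 * μ₀.rnDeriv volume x)⁻¹) =ᵐ[volume.restrict Ω]
        fun _ => (2 * (volume Ω)⁻¹)⁻¹ := by
      filter_upwards [ae_restrict_of_ae hd, ae_restrict_mem hΩm] with x hx hxΩ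
      simp [hx, Set.indicator_of_mem hxΩ]
    rw [maxDistLimit, essSup_congr_ae h1, essSup_const _ (by
      rwa [Ne, Measure.restrict_eq_zero])]
    rw [ENNReal.mul_inv (Or.inl (by norm_num)) (Or.inl (by norm_num)), inv_inv,
      ENNReal.div_eq_inv_mul]
  refine ⟨hval, ?_, ?_⟩
  · intro μ hμp hμc
    rw [hval]
    exact maxDistLimit_lower Ω hΩm μ
  · intro μ hμp hμc heq
    rw [hval] at heq
    set f := μ.rnDeriv volume with hf
    -- a.e. lower bound for the density on Ω
    have hae : ∀ᵐ x ∂(volume.restrict Ω), (volume Ω)⁻¹ ≤ f x := by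
      have h0 : ∀ᵐ x ∂(volume.restrict Ω), (2 * f x)⁻¹ ≤ volume Ω / 2 := by
        rw [← heq]; exact ENNReal.ae_le_essSup _
      filter_upwards [h0] with x hx
      have h1 : (volume Ω / 2)⁻¹ ≤ 2 * f x := ENNReal.inv_le_iff_inv_le.mp hx
      have h2 : (volume Ω / 2)⁻¹ = 2 * (volume Ω)⁻¹ := by
        rw [div_eq_mul_inv, ENNReal.mul_inv (Or.inl hpos) (Or.inl hfin), inv_inv, mul_comm]
      rw [h2] at h1
      exact (ENNReal.mul_le_mul_iff_right (by norm_num) (by norm_num)).mp h1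
    -- integral of density on Ω equals 1
    have hle1 : ∫⁻ x in Ω, f x ∂volume ≤ 1 :=
      (Measure.setLIntegral_rnDeriv_le Ω).trans prob_le_one
    have hconst : ∫⁻ _ in Ω, (volume Ω)⁻¹ ∂volume = 1 := by
      rw [setLIntegral_const]
      exact ENNReal.inv_mul_cancel hpos hfin
    have haeq : (fun _ => (volume Ω)⁻¹) =ᵐ[volume.restrict Ω] f := by
      refine ae_eq_of_ae_le_of_lintegral_le hae ?_ (Measure.measurable_rnDeriv μ volume).aemeasurable ?_
      · rw [hconst]; exact ENNReal.one_ne_top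
      · rw [hconst]; exact hle1
    have hintΩ : ∫⁻ x in Ω, f x ∂volume = 1 := by
      rw [← lintegral_congr_ae haeq, hconst]
    -- integral off Ω is zero
    have htot : ∫⁻ x, f x ∂volume ≤ 1 := by
      have := Measure.lintegral_rnDeriv_le (μ := μ) (ν := volume)
      simpa using this
    have hsplit : ∫⁻ x in Ω, f x ∂volume + ∫⁻ x in Ωᶜ, f x ∂volume = ∫⁻ x, f x ∂volume :=
      lintegral_add_compl f hΩm
    have hcompl : ∫⁻ x in Ωᶜ, f x ∂volume = 0 := by
      by_contra h
      have : 1 < ∫⁻ x, f x ∂volume := by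
        rw [← hsplit, hintΩ]
        exact ENNReal.lt_add_right ENNReal.one_ne_top h
      exact absurd htot this.not_ge
    have hzero : f =ᵐ[volume.restrict Ωᶜ] 0 :=
      (lintegral_eq_zero_iff' (Measure.measurable_rnDeriv μ volume).aemeasurable).mp hcompl
    -- identify the density globally
    have hfull : f =ᵐ[volume] fun x => Ω.indicator (fun _ => (volume Ω)⁻¹) x := by
      have h1 : ∀ᵐ x ∂volume, x ∈ Ω → f x = (volume Ω)⁻¹ :=
        (ae_restrict_iff' hΩm).mp haeq.symm
      have h2 : ∀ᵐ x ∂volume, x ∈ Ωᶜ → f x = 0 :=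
        (ae_restrict_iff' hΩm.compl).mp hzero
      filter_upwards [h1, h2] with x hx1 hx2
      by_cases hxΩ : x ∈ Ω
      · rw [hx1 hxΩ, Set.indicator_of_mem hxΩ]
      · rw [hx2 hxΩ, Set.indicator_of_notMem hxΩ]
    -- singular part vanishes
    have hdec := μ.haveLebesgueDecomposition_add volume
    have hwd : volume.withDensity f = μ₀ := by
      rw [withDensity_congr_ae hfull, withDensity_indicator hΩm, withDensity_const, hμ₀]
    have hsing : μ.singularPart volume = 0 := by
      have happ : μ Set.univ = μ.singularPart volume Set.univ + volume.withDensity f Set.univ := by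
        conv_lhs => rw [hdec]
        simp
        rfl
      rw [measure_univ, hwd, hμ₀] at happ
      simp only [Measure.smul_apply, Measure.restrict_apply_univ, smul_eq_mul,
        ENNReal.inv_mul_cancel hpos hfin] at happ
      have : μ.singularPart volume Set.univ = 0 := by
        have h1 : μ.singularPart volume Set.univ + 1 = 0 + 1 := by rw [zero_add, ← happ]
        exact WithTop.add_right_cancel ENNReal.one_ne_top h1
      exact Measure.measure_univ_eq_zero.mp this
    rw [hdec, hsing, zero_add, hwd]
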